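/- arXiv:2209.02994 — 3 statements merged into one kernel-verified Lean document; each statement's English description precedes it below -/
import Mathlib

section
/- Define u₁(x) = 8/25 - 11x/25 - (8/25)e^{-5x/ε} + (3/25)e^{-5(1-x)/ε} and u₂(x) = 4/25 + 2x/25 - (4/25)e^{-5x/ε} - (6/25)e^{-5(1-x)/ε} for ε > 0. Then (u₁, u₂) satisfies exactly the system -ε u₁'' - 3u₁' - 4u₂' = 1 and -ε u₂'' - 4u₁' + 3u₂' = 2 on (0,1), and the boundary values satisfy |u₁(0)|, |u₂(0)|, |u₁(1)|, |u₂(1)| ≤ C e^{-5/ε} for a constant C independent of ε. -/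
open Real

lemma aux_hasDerivAt (ε : ℝ) (a b p q x : ℝ) :
    HasDerivAt (fun x : ℝ => a + b * x + p * Real.exp (-5 * x / ε)
        + q * Real.exp (-5 * (1 - x) / ε))
      (b + 0 * x + (p * (-5 / ε)) * Real.exp (-5 * x / ε)
        + (q * (5 / ε)) * Real.exp (-5 * (1 - x) / ε)) x := by
  have h1 : HasDerivAt (fun x : ℝ => -5 * x / ε) (-5 / ε) x := by
    simpa using ((hasDerivAt_id x).const_mul (-5 : ℝ)).div_const ε
  have h2 : HasDerivAt (fun x : ℝ => -5 * (1 - x) / ε) (5 / ε) x := by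
    have := (((hasDerivAt_const x (1:ℝ)).sub (hasDerivAt_id x)).const_mul (-5 : ℝ)).div_const ε
    simpa using this
  have := (((hasDerivAt_const x a).add ((hasDerivAt_id x).const_mul b)).add
      (h1.exp.const_mul p)).add (h2.exp.const_mul q)
  convert this using 1
  · rfl
  · rfl
  · rfl
  · ring

lemma aux_deriv (ε : ℝ) (a b p q : ℝ) :
    deriv (fun x : ℝ => a + b * x + p * Real.exp (-5 * x / ε)
        + q * Real.exp (-5 * (1 - x) / ε))
      = fun x : ℝ => b + 0 * x + (p * (-5 / ε)) * Real.exp (-5 * x / ε)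
        + (q * (5 / ε)) * Real.exp (-5 * (1 - x) / ε) := by
  funext x
  exact (aux_hasDerivAt ε a b p q x).deriv

/-- The explicit asymptotic approximation of the strongly coupled system
`-ε u₁'' - 3u₁' - 4u₂' = 1`, `-ε u₂'' - 4u₁' + 3u₂' = 2` solves the system
exactly on `(0,1)`, with boundary values of size `O(e^{-5/ε})` uniformly
in `ε`. -/
theorem strongly_coupled_asymptotic_solution :
    ∃ C : ℝ, ∀ ε : ℝ, 0 < ε → ∀ u₁ u₂ : ℝ → ℝ,
      (∀ x, u₁ x = 8 / 25 - 11 * x / 25 - (8 / 25) * Real.exp (-5 * x / ε)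
          + (3 / 25) * Real.exp (-5 * (1 - x) / ε)) →
      (∀ x, u₂ x = 4 / 25 + 2 * x / 25 - (4 / 25) * Real.exp (-5 * x / ε)
          - (6 / 25) * Real.exp (-5 * (1 - x) / ε)) →
      (∀ x ∈ Set.Ioo (0:ℝ) 1,
        -ε * deriv (deriv u₁) x - 3 * deriv u₁ x - 4 * deriv u₂ x = 1 ∧
        -ε * deriv (deriv u₂) x - 4 * deriv u₁ x + 3 * deriv u₂ x = 2) ∧
      |u₁ 0| ≤ C * Real.exp (-5 / ε) ∧ |u₂ 0| ≤ C * Real.exp (-5 / ε) ∧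
      |u₁ 1| ≤ C * Real.exp (-5 / ε) ∧ |u₂ 1| ≤ C * Real.exp (-5 / ε) := by
  refine ⟨1, fun ε hε u₁ u₂ hu₁ hu₂ => ?_⟩
  have hεne : ε ≠ 0 := ne_of_gt hε
  have hU₁ : u₁ = fun x : ℝ => 8/25 + (-11/25) * x + (-8/25) * Real.exp (-5 * x / ε)
      + (3/25) * Real.exp (-5 * (1 - x) / ε) := by
    funext x; rw [hu₁]; ring
  have hU₂ : u₂ = fun x : ℝ => 4/25 + (2/25) * x + (-4/25) * Real.exp (-5 * x / ε)
      + (-6/25) * Real.exp (-5 * (1 - x) / ε) := by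
    funext x; rw [hu₂]; ring
  subst hU₁ hU₂
  have hE : ∀ x : ℝ, 0 < Real.exp (-5 / ε) := fun _ => Real.exp_pos _
  refine ⟨fun x _ => ?_, ?_, ?_, ?_, ?_⟩
  · simp only [aux_deriv]
    constructor <;> · field_simp; ring
  all_goals
    simp only
    rw [abs_le]
    norm_num
    constructor <;> nlinarith [Real.exp_pos (-5/ε)]
end

section
/- Let 0 < ε ≤ 1, β > 0, μ ≥ 1, N ≥ 4 even, and consider the Shishkin mesh on [0,1] with transition point σ = min{1/2, (με/β) ln N}, N/2 equal subintervals on each of [0,σ] and [σ,1]. Then for the layer function E(x) = e^{-βx/ε}, one has max_{1 ≤ k ≤ N} ∫_{x_{k-1}}^{x_k} (1 + ε^{-1} E(x)) dx ≤ C N^{-1} ln N for a constant C depending only on μ and β (not on ε or N). -/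
open Real intervalIntegral

lemma shishkin_exp_integral (ε β a b : ℝ) (hε : 0 < ε) (hβ : 0 < β) :
    (∫ t in a..b, (1 + ε⁻¹ * Real.exp (-β * t / ε))) =
      (b - a) + (1/β) * (Real.exp (-β * a / ε) - Real.exp (-β * b / ε)) := by
  have h : ∀ t : ℝ, HasDerivAt (fun t => t - (1/β) * Real.exp (-β * t / ε))
      (1 + ε⁻¹ * Real.exp (-β * t / ε)) t := by
    intro t
    have h1 : HasDerivAt (fun t : ℝ => -β * t / ε) (-β / ε) t := by
      simpa using ((hasDerivAt_id t).const_mul (-β)).div_const ε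
    have h3 := (hasDerivAt_id t).sub (h1.exp.const_mul (1/β))
    convert h3 using 1
    · rfl
    · rfl
    · rfl
    · field_simp
      ring
  rw [intervalIntegral.integral_eq_sub_of_hasDerivAt (fun t _ => h t)
    (Continuous.intervalIntegrable (by continuity) a b)]
  ring

lemma exp_diff_le (ε β a b : ℝ) (hε : 0 < ε) (hβ : 0 < β) (hab : a ≤ b) :
    Real.exp (-β * a / ε) - Real.exp (-β * b / ε) ≤
      Real.exp (-β * a / ε) * (β * (b - a) / ε) := by
  have hs : 0 ≤ β * (b - a) / ε := by
    have : 0 ≤ b - a := by linarith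
    positivity
  have h1 : Real.exp (-β * b / ε)
      = Real.exp (-β * a / ε) * Real.exp (-(β * (b - a) / ε)) := by
    rw [← Real.exp_add]; congr 1; field_simp; ring
  have h2 : 1 - (β * (b - a) / ε) ≤ Real.exp (-(β * (b - a) / ε)) := by
    have := Real.add_one_le_exp (-(β * (b - a) / ε)); linarith
  calc Real.exp (-β * a / ε) - Real.exp (-β * b / ε)
      = Real.exp (-β * a / ε) * (1 - Real.exp (-(β * (b - a) / ε))) := by rw [h1]; ring
    _ ≤ Real.exp (-β * a / ε) * (β * (b - a) / ε) := by
        apply mul_le_mul_of_nonneg_left _ (Real.exp_nonneg _)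
        linarith

lemma term2_le (ε β a b : ℝ) (hε : 0 < ε) (hβ : 0 < β) (ha0 : 0 ≤ a) (hab : a ≤ b) :
    (1/β) * (Real.exp (-β * a / ε) - Real.exp (-β * b / ε)) ≤ (b - a) / ε := by
  have hEa : Real.exp (-β * a / ε) ≤ 1 := by
    rw [Real.exp_le_one_iff]
    have : -β * a ≤ 0 := by nlinarith
    exact div_nonpos_of_nonpos_of_nonneg this (le_of_lt hε)
  have hdiff := exp_diff_le ε β a b hε hβ hab
  have hs : 0 ≤ β * (b - a) / ε := by
    have : 0 ≤ b - a := by linarith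
    positivity
  have h' : Real.exp (-β * a / ε) - Real.exp (-β * b / ε) ≤ β * (b - a) / ε := by
    nlinarith [Real.exp_nonneg (-β * a / ε)]
  have := mul_le_mul_of_nonneg_left h' (le_of_lt (one_div_pos.mpr hβ))
  calc (1/β) * (Real.exp (-β * a / ε) - Real.exp (-β * b / ε))
      ≤ (1/β) * (β * (b - a) / ε) := this
    _ = (b - a) / ε := by field_simp

set_option maxHeartbeats 1600000 in
/-- The key mesh-integral estimate on a Shishkin mesh: with transition point
`σ = min {1/2, (με/β) ln N}` and `N/2` equal subintervals on each of `[0,σ]`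
and `[σ,1]`, the integral of `1 + ε⁻¹ e^{-βx/ε}` over any mesh interval is at
most `C N⁻¹ ln N`, with `C` depending only on `μ` and `β`. -/
theorem shishkin_mesh_integral_estimate (μ β : ℝ) (hμ : 1 ≤ μ) (hβ : 0 < β) :
    ∃ C : ℝ, 0 < C ∧
      ∀ (ε : ℝ) (N : ℕ), 0 < ε → ε ≤ 1 → 4 ≤ N → Even N →
        ∀ (σ : ℝ) (x : ℕ → ℝ),
          σ = min (1 / 2) (μ * ε / β * Real.log N) →
          (∀ k ≤ N / 2, x k = 2 * σ * k / N) →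
          (∀ k, N / 2 ≤ k → k ≤ N →
            x k = σ + 2 * (1 - σ) * ((k : ℝ) - (N : ℝ) / 2) / N) →
          ∀ k, 1 ≤ k → k ≤ N →
            (∫ t in x (k - 1)..x k, (1 + ε⁻¹ * Real.exp (-β * t / ε))) ≤
              C * (N : ℝ)⁻¹ * Real.log N := by
  have hμ0 : 0 < μ := lt_of_lt_of_le one_pos hμ
  refine ⟨2 + 4*μ/β + 1/β, by positivity, ?_⟩
  intro ε N hε hε1 hN heven σ x hσ hfine hcoarse k hk1 hkN
  set n : ℝ := (N : ℝ) with hn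
  set L : ℝ := Real.log n with hLdef
  have hn4 : (4:ℝ) ≤ n := by
    rw [hn]; exact_mod_cast hN
  have hn0 : (0:ℝ) < n := by linarith
  have hL1 : 1 ≤ L := by
    rw [hLdef, Real.le_log_iff_exp_le hn0]
    have := Real.exp_one_lt_d9
    linarith
  have hL0 : (0:ℝ) < L := lt_of_lt_of_le one_pos hL1
  have hnL : (0:ℝ) ≤ n⁻¹ * L := by positivity
  have hσle : σ ≤ μ * ε / β * L := by rw [hσ]; exact min_le_right _ _
  have hσhalf : σ ≤ 1/2 := by rw [hσ]; exact min_le_left _ _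
  have hσ0 : (0:ℝ) ≤ σ := by
    rw [hσ]
    exact le_min (by norm_num) (by positivity)
  rw [shishkin_exp_integral ε β _ _ hε hβ]
  set a : ℝ := x (k-1) with hadef
  set b : ℝ := x k with hbdef
  have hcoef0 : (0:ℝ) < 4*μ/β + 1/β := by positivity
  rcases le_or_gt k (N/2) with hcase | hcase
  · -- fine mesh
    have hk1' : k - 1 ≤ N/2 := le_trans (Nat.sub_le k 1) hcase
    have ha : a = 2 * σ * (↑(k-1)) / n := hfine _ hk1'
    have hb : b = 2 * σ * (k:ℝ) / n := hfine _ hcase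
    have hcast : ((k-1 : ℕ):ℝ) = (k:ℝ) - 1 := by
      have := Nat.cast_sub hk1 (R := ℝ); simpa using this
    have hba : b - a = 2 * σ / n := by
      rw [ha, hb, hcast]; field_simp; ring
    have hab : a ≤ b := by
      have : 0 ≤ 2 * σ / n := by positivity
      linarith
    have ha0 : 0 ≤ a := by
      rw [ha, hcast]
      have hk1r : (1:ℝ) ≤ (k:ℝ) := by exact_mod_cast hk1
      have : (0:ℝ) ≤ (k:ℝ) - 1 := by linarith
      positivity
    have h1 : b - a ≤ 2 * (n⁻¹ * L) := by
      rw [hba]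
      have h2 : 2 * σ / n ≤ 2 / n := by gcongr <;> linarith
      have h3 : n⁻¹ * 1 ≤ n⁻¹ * L := mul_le_mul_of_nonneg_left hL1 (inv_nonneg.mpr hn0.le)
      have h4 : (2:ℝ) / n = 2 * n⁻¹ := by rw [div_eq_mul_inv]
      linarith
    have hT2 := term2_le ε β a b hε hβ ha0 hab
    have hT2' : (b - a) / ε ≤ (2*μ/β) * (n⁻¹ * L) := by
      rw [hba]
      have key : 2 * σ / n / ε ≤ 2 * (μ * ε / β * L) / n / ε := by gcongr
      calc 2 * σ / n / ε ≤ 2 * (μ * ε / β * L) / n / ε := key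
        _ = (2*μ/β) * (n⁻¹ * L) := by field_simp
    have hcoef : (2*μ/β) * (n⁻¹ * L) ≤ (4*μ/β + 1/β) * (n⁻¹ * L) := by
      have hc : 2*μ/β ≤ 4*μ/β + 1/β := by
        have h1 : (0:ℝ) ≤ 2*μ/β := by positivity
        have h2 : (0:ℝ) ≤ 1/β := by positivity
        have h3 : 4*μ/β = 2*μ/β + 2*μ/β := by ring
        linarith
      exact mul_le_mul_of_nonneg_right hc hnL
    have hT2f := hT2.trans (hT2'.trans hcoef)
    have hring : (2 + 4*μ/β + 1/β) * n⁻¹ * L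
        = 2 * (n⁻¹ * L) + (4*μ/β + 1/β) * (n⁻¹ * L) := by ring
    linarith
  · -- coarse mesh
    have hk1' : N/2 ≤ k - 1 := Nat.le_pred_of_lt hcase
    have hkk : k - 1 ≤ N := le_trans (Nat.sub_le k 1) hkN
    have ha : a = σ + 2 * (1 - σ) * ((↑(k-1):ℝ) - n / 2) / n := hcoarse _ hk1' hkk
    have hb : b = σ + 2 * (1 - σ) * ((k:ℝ) - n / 2) / n := hcoarse _ (le_of_lt hcase) hkN
    have hcast : ((k-1 : ℕ):ℝ) = (k:ℝ) - 1 := by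
      have := Nat.cast_sub hk1 (R := ℝ); simpa using this
    have hσ1 : 1 - σ ≥ 1/2 := by linarith
    have hba : b - a = 2 * (1 - σ) / n := by
      rw [ha, hb, hcast]; field_simp; ring
    have hab : a ≤ b := by
      have : 0 ≤ 2 * (1 - σ) / n := by positivity
      linarith
    have hN2cast : ((N/2 : ℕ):ℝ) = n / 2 := by
      rw [Nat.cast_div heven.two_dvd (by norm_num)]
      norm_num
      exact hn.symm
    have hkhalf : n / 2 ≤ ((k-1:ℕ):ℝ) := by
      rw [← hN2cast]; exact_mod_cast hk1'
    have haσ : σ ≤ a := by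
      rw [ha]
      have h0 : 0 ≤ (↑(k-1):ℝ) - n / 2 := by linarith
      have : 0 ≤ 2 * (1 - σ) * ((↑(k-1):ℝ) - n / 2) / n := by positivity
      linarith
    have ha0 : 0 ≤ a := le_trans hσ0 haσ
    have h1 : b - a ≤ 2 * (n⁻¹ * L) := by
      rw [hba]
      have h2 : 2 * (1 - σ) / n ≤ 2 / n := by gcongr <;> linarith
      have h3 : n⁻¹ * 1 ≤ n⁻¹ * L := mul_le_mul_of_nonneg_left hL1 (inv_nonneg.mpr hn0.le)
      have h4 : (2:ℝ) / n = 2 * n⁻¹ := by rw [div_eq_mul_inv]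
      linarith
    have hT2goal : (1/β) * (Real.exp (-β * a / ε) - Real.exp (-β * b / ε))
        ≤ (4*μ/β + 1/β) * (n⁻¹ * L) := by
      rcases le_total (μ * ε / β * L) (1/2) with hmin | hmin
      · -- σ = μεL/β : exp(-βσ/ε) = N^{-μ} ≤ 1/N
        have hσval : σ = μ * ε / β * L := by rw [hσ]; exact min_eq_right hmin
        have harg : -β * a / ε ≤ -(μ * L) := by
          have h2 : -β * a ≤ -β * σ := by
            have := mul_le_mul_of_nonneg_left haσ hβ.le
            linarith
          have h3 : -β * a / ε ≤ -β * σ / ε := (div_le_div_iff_of_pos_right hε).mpr h2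
          have h4 : -β * σ / ε = -(μ * L) := by
            rw [hσval]; field_simp
          linarith
        have hEa : Real.exp (-β * a / ε) ≤ n⁻¹ := by
          calc Real.exp (-β * a / ε) ≤ Real.exp (-(μ * L)) := Real.exp_le_exp.mpr harg
            _ ≤ Real.exp (-L) := by
                apply Real.exp_le_exp.mpr
                have := mul_le_mul_of_nonneg_right hμ hL0.le
                linarith
            _ = n⁻¹ := by rw [Real.exp_neg, hLdef, Real.exp_log hn0]
        have hEb : 0 ≤ Real.exp (-β * b / ε) := Real.exp_nonneg _
        calc (1/β) * (Real.exp (-β * a / ε) - Real.exp (-β * b / ε))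
            ≤ (1/β) * n⁻¹ := by
              apply mul_le_mul_of_nonneg_left _ (le_of_lt (one_div_pos.mpr hβ))
              linarith
          _ ≤ (1/β) * (n⁻¹ * L) := by
              have h5 : n⁻¹ * 1 ≤ n⁻¹ * L :=
                mul_le_mul_of_nonneg_left hL1 (inv_nonneg.mpr hn0.le)
              have h6 : n⁻¹ ≤ n⁻¹ * L := by linarith
              exact mul_le_mul_of_nonneg_left h6 (le_of_lt (one_div_pos.mpr hβ))
          _ ≤ (4*μ/β + 1/β) * (n⁻¹ * L) := by
              apply mul_le_mul_of_nonneg_right _ hnL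
              have : 0 ≤ 4*μ/β := by positivity
              linarith
      · -- σ = 1/2 : ε⁻¹ ≤ 2μL/β
        have hσval : σ = 1/2 := by rw [hσ]; exact min_eq_left hmin
        have hT2 := term2_le ε β a b hε hβ ha0 hab
        have hinv : ε⁻¹ ≤ 2*μ*L/β := by
          rw [le_div_iff₀ hβ]
          have hh : β ≤ 2*μ*ε*L := by
            have h7 := mul_le_mul_of_nonneg_right hmin hβ.le
            have h8 : (μ*ε/β*L)*β = μ*ε*L := by field_simp
            rw [h8] at h7
            linarith
          have h9 := mul_le_mul_of_nonneg_left hh (inv_nonneg.mpr hε.le)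
          have h10 : ε⁻¹ * (2*μ*ε*L) = 2*μ*L := by
            rw [show ε⁻¹ * (2*μ*ε*L) = (ε⁻¹*ε) * (2*μ*L) by ring,
              inv_mul_cancel₀ (ne_of_gt hε), one_mul]
          rw [h10] at h9
          linarith
        have hT2' : (b - a) / ε ≤ (4*μ/β) * (n⁻¹ * L) := by
          rw [hba, hσval]
          have heq0 : 2 * (1 - 1/2) / n / ε = n⁻¹ * ε⁻¹ := by
            ring
          rw [heq0]
          calc n⁻¹ * ε⁻¹ ≤ n⁻¹ * (2*μ*L/β) := by
                apply mul_le_mul_of_nonneg_left hinv (le_of_lt (inv_pos.mpr hn0))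
            _ ≤ (4*μ/β) * (n⁻¹ * L) := by
                have heq : n⁻¹ * (2*μ*L/β) = (2*μ/β) * (n⁻¹ * L) := by
                  ring
                rw [heq]
                apply mul_le_mul_of_nonneg_right _ hnL
                have h1 : (0:ℝ) ≤ 2*μ/β := by positivity
                have h3 : 4*μ/β = 2*μ/β + 2*μ/β := by ring
                linarith
        calc (1/β) * (Real.exp (-β * a / ε) - Real.exp (-β * b / ε))
            ≤ (b - a) / ε := hT2
          _ ≤ (4*μ/β) * (n⁻¹ * L) := hT2'
          _ ≤ (4*μ/β + 1/β) * (n⁻¹ * L) := by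
              apply mul_le_mul_of_nonneg_right _ hnL
              have : 0 ≤ 1/β := by positivity
              linarith
    have hring : (2 + 4*μ/β + 1/β) * n⁻¹ * L
        = 2 * (n⁻¹ * L) + (4*μ/β + 1/β) * (n⁻¹ * L) := by ring
    linarith
end

section
/- Let V be a real Hilbert space, U a reflexive Banach space, A: U × V → ℝ a bounded bilinear form satisfying the inf-sup condition inf_{u≠0} sup_{v≠0} A(u,v)/(‖u‖_U ‖v‖_V) ≥ γ > 0, and define the trial-to-test operator Θ: U → V by ⟨Θu, v⟩_V = A(u, v) for all v ∈ V. Let U_h ⊆ U be a closed subspace, f ∈ V*, and suppose u ∈ U solves A(u, v) = f(v) for all v ∈ V while u_h ∈ U_h solves A(u_h, v_h) = f(v_h) for all v_h ∈ Θ(U_h). Then u_h is the best approximation of u from U_h in the energy norm ‖w‖_E := sup_{v≠0} A(w,v)/‖v‖_V, i.e. ‖u - u_h‖_E = inf_{w_h ∈ U_h} ‖u - w_h‖_E. -/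
open Real NormedSpace

/-- Optimality of the ideal dPG method with optimal test functions: if the
trial-to-test operator `Θ` is defined by `⟪Θu, v⟫ = A(u,v)`, then the
Petrov–Galerkin solution `u_h` with test space `Θ(U_h)` is the best
approximation of `u` from `U_h` in the energy norm
`‖w‖_E = sup_v A(w,v)/‖v‖_V`. -/
theorem dPG_optimal_test_functions_best_approximation
    {U : Type*} [NormedAddCommGroup U] [NormedSpace ℝ U] [CompleteSpace U]
    {V : Type*} [NormedAddCommGroup V] [InnerProductSpace ℝ V] [CompleteSpace V]
    (hrefl : Function.Surjective (inclusionInDoubleDual ℝ U))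
    (A : U →L[ℝ] V →L[ℝ] ℝ) (γ : ℝ) (hγ : 0 < γ)
    (hinfsup : ∀ u : U, γ * ‖u‖ ≤ ⨆ v : V, A u v / ‖v‖)
    (Θ : U → V) (hΘ : ∀ (u : U) (v : V), inner ℝ (Θ u) v = (A u v : ℝ))
    (Uh : Submodule ℝ U) (hUh : IsClosed (Uh : Set U))
    (f : V →L[ℝ] ℝ)
    (u : U) (hu : ∀ v : V, A u v = f v)
    (uh : U) (huh : uh ∈ Uh)
    (hdisc : ∀ wh ∈ Uh, A uh (Θ wh) = f (Θ wh))
    (E : U → ℝ) (hE : ∀ w : U, E w = ⨆ v : V, A w v / ‖v‖) :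
    E (u - uh) = ⨅ wh : Uh, E (u - wh) := by
  -- E w = ‖Θ w‖
  have hb : ∀ w : U, ∀ v : V, A w v / ‖v‖ ≤ ‖Θ w‖ := by
    intro w v
    rw [← hΘ]
    rcases eq_or_ne v 0 with h0 | h0
    · simp [h0]
    · rw [div_le_iff₀ (norm_pos_iff.mpr h0)]
      exact real_inner_le_norm _ _
  have hbdd : ∀ w : U, BddAbove (Set.range fun v : V => A w v / ‖v‖) := by
    intro w
    exact ⟨‖Θ w‖, fun x hx => by obtain ⟨v, rfl⟩ := hx; exact hb w v⟩
  have hEnorm : ∀ w : U, E w = ‖Θ w‖ := by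
    intro w
    rw [hE]
    apply le_antisymm (ciSup_le (hb w))
    rcases eq_or_ne (Θ w) 0 with h0 | h0
    · rw [h0, norm_zero]
      have : (0 : ℝ) = A w 0 / ‖(0 : V)‖ := by simp
      rw [this]
      exact le_ciSup (hbdd w) 0
    · have : ‖Θ w‖ = A w (Θ w) / ‖Θ w‖ := by
        rw [← hΘ, real_inner_self_eq_norm_mul_norm, mul_div_assoc,
          div_self (norm_ne_zero_iff.mpr h0), mul_one]
      rw [this]
      exact le_ciSup (hbdd w) (Θ w)
  -- Galerkin orthogonality
  have hperp : ∀ wh ∈ Uh, inner ℝ (Θ (u - uh)) (Θ wh) = (0 : ℝ) := by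
    intro wh hwh
    rw [hΘ]
    simp [map_sub, hu, hdisc wh hwh]
  have key : ∀ wh ∈ Uh, ‖Θ (u - uh)‖ ≤ ‖Θ (u - wh)‖ := by
    intro wh hwh
    have hsplit : Θ (u - wh) = Θ (u - uh) + Θ (uh - wh) := by
      apply ext_inner_right ℝ
      intro v
      rw [inner_add_left, hΘ, hΘ, hΘ]
      simp [map_sub]
    have horth : inner ℝ (Θ (u - uh)) (Θ (uh - wh)) = (0 : ℝ) :=
      hperp _ (Uh.sub_mem huh hwh)
    rw [hsplit]
    have hpyth := norm_add_sq_real (Θ (u - uh)) (Θ (uh - wh))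
    rw [horth] at hpyth
    nlinarith [norm_nonneg (Θ (u - uh)), norm_nonneg (Θ (uh - wh)),
      norm_nonneg (Θ (u - uh) + Θ (uh - wh)), sq_nonneg ‖Θ (uh - wh)‖]
  haveI : Nonempty Uh := ⟨⟨uh, huh⟩⟩
  apply le_antisymm
  · refine le_ciInf fun wh => ?_
    rw [hEnorm, hEnorm]
    exact key wh wh.2
  · refine ciInf_le_of_le ⟨0, fun x hx => ?_⟩ ⟨uh, huh⟩ le_rfl
    obtain ⟨wh, rfl⟩ := hx
    show (0:ℝ) ≤ E (u - wh)
    rw [hEnorm]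
    positivity
end
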